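/- arXiv:2011.12781 — 2 statements merged into one kernel-verified Lean document; each statement's English description precedes it below -/
import Mathlib

section
/- (Phillips–Solo / Beveridge–Nelson decomposition, deterministic form.) Let (Φ_j)_{j≥0} be bounded linear operators on H with Σ_{j≥1} j·‖Φ_j‖_op < ∞ and Σ_{j≥0} ‖Φ_j‖_op < ∞, and let ε : ℤ → H satisfy ‖ε_t‖ ≤ M for all t ∈ ℤ and some M > 0. Set Φ̃_j := −Σ_{k=j+1}^∞ Φ_k, Φ(1) := Σ_{j=0}^∞ Φ_j, and define ζ_t := Σ_{j=0}^∞ Φ_j ε_{t−j} and η_t := Σ_{j=0}^∞ Φ̃_j ε_{t−j}; all of these series converge absolutely in H. Then for every integer t ≥ 1: Σ_{s=1}^t ζ_s = Φ(1)(Σ_{s=1}^t ε_s) + η_t − η_0. -/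
set_option maxHeartbeats 1000000

private lemma tail_summable (g : ℕ → ℝ) (hg : ∀ n, 0 ≤ g n)
    (h1 : Summable fun j : ℕ => (j:ℝ) * g j) :
    Summable fun j : ℕ => ∑' k : ℕ, g (j + 1 + k) := by
  have hf : Summable fun p : ℕ × ℕ => g (p.1 + 1 + p.2) := by
    apply summable_of_sum_le (c := ∑' m : ℕ, (m:ℝ) * g m)
    · intro p; exact hg _
    · intro u
      have hmaps : ∀ p ∈ u, p.1 + 1 + p.2 ∈ u.image (fun p : ℕ × ℕ => p.1 + 1 + p.2) := by
        intro p hp; exact Finset.mem_image_of_mem _ hp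
      rw [← Finset.sum_fiberwise_of_maps_to hmaps (fun p => g (p.1 + 1 + p.2))]
      calc ∑ m ∈ u.image (fun p : ℕ × ℕ => p.1 + 1 + p.2),
            ∑ p ∈ u.filter (fun p => p.1 + 1 + p.2 = m), g (p.1 + 1 + p.2)
          ≤ ∑ m ∈ u.image (fun p : ℕ × ℕ => p.1 + 1 + p.2), (m:ℝ) * g m := by
            apply Finset.sum_le_sum
            intro m hm
            have : ∑ p ∈ u.filter (fun p => p.1 + 1 + p.2 = m), g (p.1 + 1 + p.2)
                = (u.filter (fun p => p.1 + 1 + p.2 = m)).card * g m := by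
              rw [Finset.sum_congr rfl (fun p hp => by
                rw [(Finset.mem_filter.1 hp).2]), Finset.sum_const, nsmul_eq_mul]
            rw [this]
            apply mul_le_mul_of_nonneg_right _ (hg m)
            have hcard : (u.filter (fun p => p.1 + 1 + p.2 = m)).card ≤ m := by
              have := Finset.card_le_card_of_injOn (fun p : ℕ × ℕ => p.1)
                (s := u.filter (fun p => p.1 + 1 + p.2 = m)) (t := Finset.range m)
                (by intro p hp; simp only [Finset.coe_range, Set.mem_Iio, Finset.mem_range, Finset.mem_coe]
                    have := (Finset.mem_filter.1 hp).2; omega)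
                (by intro p hp q hq hpq
                    have h1 := (Finset.mem_filter.1 hp).2
                    have h2 := (Finset.mem_filter.1 hq).2
                    have hpq' : p.1 = q.1 := hpq
                    have : p.2 = q.2 := by omega
                    exact Prod.ext hpq' this)
              simpa using this
            exact_mod_cast hcard
        _ ≤ ∑' m : ℕ, (m:ℝ) * g m := by
            apply Summable.sum_le_tsum _ _ h1
            intro m _; exact mul_nonneg (Nat.cast_nonneg m) (hg m)
  exact ((summable_prod_of_nonneg (fun p => hg _)).1 hf).2

/-- Phillips–Solo / Beveridge–Nelson decomposition, deterministic form:
with `ζ_t = Σ_j Φ_j ε_{t-j}` and `η_t = Σ_j Φ̃_j ε_{t-j}` (absolutely convergent),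
`Σ_{s=1}^t ζ_s = Φ(1)(Σ_{s=1}^t ε_s) + η_t - η_0` for every `t ≥ 1`. -/
theorem stmt2 {H : Type*} [NormedAddCommGroup H] [InnerProductSpace ℝ H]
    [CompleteSpace H] [TopologicalSpace.SeparableSpace H]
    (Φ : ℕ → H →L[ℝ] H) (ε : ℤ → H) (M : ℝ) (hM : 0 < M)
    (hε : ∀ t : ℤ, ‖ε t‖ ≤ M)
    (h1 : Summable fun j : ℕ => (j : ℝ) * ‖Φ j‖)
    (h2 : Summable fun j : ℕ => ‖Φ j‖)
    (Φt : ℕ → H →L[ℝ] H) (hΦt : ∀ j : ℕ, Φt j = -∑' k : ℕ, Φ (j + 1 + k))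
    (Φ1 : H →L[ℝ] H) (hΦ1 : Φ1 = ∑' j : ℕ, Φ j)
    (ζ η : ℤ → H)
    (hζ : ∀ t : ℤ, ζ t = ∑' j : ℕ, Φ j (ε (t - (j : ℤ))))
    (hη : ∀ t : ℤ, η t = ∑' j : ℕ, Φt j (ε (t - (j : ℤ)))) :
    (∀ t : ℤ, Summable fun j : ℕ => ‖Φ j (ε (t - (j : ℤ)))‖) ∧
    (∀ t : ℤ, Summable fun j : ℕ => ‖Φt j (ε (t - (j : ℤ)))‖) ∧
    ∀ t : ℕ, 1 ≤ t →
      ∑ s ∈ Finset.Icc 1 t, ζ (s : ℤ) =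
        Φ1 (∑ s ∈ Finset.Icc 1 t, ε (s : ℤ)) + η (t : ℤ) - η 0 := by
  have hsΦ : Summable Φ := h2.of_norm
  have htail : ∀ j : ℕ, Summable fun k : ℕ => Φ (j + 1 + k) := by
    intro j
    have : Function.Injective (fun k : ℕ => j + 1 + k) := fun a b h => by simpa using h
    exact hsΦ.comp_injective this
  have htailn : ∀ j : ℕ, Summable fun k : ℕ => ‖Φ (j + 1 + k)‖ := by
    intro j
    have : Function.Injective (fun k : ℕ => j + 1 + k) := fun a b h => by simpa using h
    exact h2.comp_injective this
  set r : ℕ → ℝ := fun j => ∑' k : ℕ, ‖Φ (j + 1 + k)‖ with hr_def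
  have hr : Summable r := tail_summable _ (fun n => norm_nonneg _) h1
  have hΦtle : ∀ j, ‖Φt j‖ ≤ r j := by
    intro j
    rw [hΦt j, norm_neg]
    exact norm_tsum_le_tsum_norm (htailn j)
  have sum1 : ∀ t : ℤ, Summable fun j : ℕ => ‖Φ j (ε (t - (j : ℤ)))‖ := by
    intro t
    apply Summable.of_nonneg_of_le (fun j => norm_nonneg _) _ (h2.mul_right M)
    intro j
    calc ‖Φ j (ε (t - (j:ℤ)))‖ ≤ ‖Φ j‖ * ‖ε (t - (j:ℤ))‖ := (Φ j).le_opNorm _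
      _ ≤ ‖Φ j‖ * M := mul_le_mul_of_nonneg_left (hε _) (norm_nonneg _)
  have sum2 : ∀ t : ℤ, Summable fun j : ℕ => ‖Φt j (ε (t - (j : ℤ)))‖ := by
    intro t
    apply Summable.of_nonneg_of_le (fun j => norm_nonneg _) _ (hr.mul_right M)
    intro j
    calc ‖Φt j (ε (t - (j:ℤ)))‖ ≤ ‖Φt j‖ * ‖ε (t - (j:ℤ))‖ := (Φt j).le_opNorm _
      _ ≤ r j * M :=
        mul_le_mul (hΦtle j) (hε _) (norm_nonneg _) ((norm_nonneg _).trans (hΦtle j))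
  -- operator identities
  have hop : ∀ j : ℕ, Φt j + Φ (j + 1) = Φt (j + 1) := by
    intro j
    rw [hΦt j, hΦt (j + 1)]
    have e1 : (∑' k : ℕ, Φ (j + 1 + k)) = Φ (j + 1 + 0) + ∑' k : ℕ, Φ (j + 1 + (k + 1)) :=
      Summable.tsum_eq_zero_add (htail j)
    have e2 : (∑' k : ℕ, Φ (j + 1 + (k + 1))) = ∑' k : ℕ, Φ (j + 1 + 1 + k) := by
      apply tsum_congr; intro k; congr 1; omega
    rw [e1, e2]
    simp only [Nat.add_zero]
    abel
  have hΦ10 : Φ1 + Φt 0 = Φ 0 := by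
    rw [hΦ1, hΦt 0]
    have e1 : (∑' j : ℕ, Φ j) = Φ 0 + ∑' k : ℕ, Φ (k + 1) := Summable.tsum_eq_zero_add hsΦ
    have e2 : (∑' k : ℕ, Φ (0 + 1 + k)) = ∑' k : ℕ, Φ (k + 1) := by
      apply tsum_congr; intro k; congr 1; omega
    rw [e1, e2]
    abel
  -- the key one-step identity
  have key : ∀ t : ℤ, ζ t = Φ1 (ε t) + (η t - η (t - 1)) := by
    intro t
    have S1 : Summable fun j : ℕ => Φ j (ε (t - (j:ℤ))) := (sum1 t).of_norm
    have S2 : Summable fun j : ℕ => Φt j (ε (t - (j:ℤ))) := (sum2 t).of_norm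
    have S2' : Summable fun j : ℕ => Φt j (ε (t - 1 - (j:ℤ))) := (sum2 (t - 1)).of_norm
    have hre : (fun j : ℕ => Φt j (ε (t - ((j:ℤ) + 1)))) =
        fun j : ℕ => Φt j (ε (t - 1 - (j:ℤ))) := by
      funext j; have h : t - ((j:ℤ) + 1) = t - 1 - (j:ℤ) := by omega
      rw [h]
    have Sb : Summable fun j : ℕ => Φt j (ε (t - ((j:ℤ) + 1))) := by rw [hre]; exact S2'
    have Sa : Summable fun j : ℕ => Φt (j + 1) (ε (t - ((j:ℤ) + 1))) := by
      have := (summable_nat_add_iff 1).2 S2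
      convert this using 2 with j
      simp only [Nat.cast_add, Nat.cast_one]
    have hζt : ζ t = Φ 0 (ε t) + ∑' j : ℕ, Φ (j + 1) (ε (t - ((j:ℤ) + 1))) := by
      rw [hζ t, Summable.tsum_eq_zero_add S1]
      simp only [Nat.cast_zero, sub_zero]
      congr 1
    have hηt : η t = Φt 0 (ε t) + ∑' j : ℕ, Φt (j + 1) (ε (t - ((j:ℤ) + 1))) := by
      rw [hη t, Summable.tsum_eq_zero_add S2]
      simp only [Nat.cast_zero, sub_zero]
      congr 1
    have hηt1 : η (t - 1) = ∑' j : ℕ, Φt j (ε (t - ((j:ℤ) + 1))) := by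
      rw [hη (t - 1)]
      apply tsum_congr; intro j; congr 2; omega
    have hdiff : η t - η (t - 1) =
        Φt 0 (ε t) + ∑' j : ℕ, Φ (j + 1) (ε (t - ((j:ℤ) + 1))) := by
      rw [hηt, hηt1]
      have : (∑' j : ℕ, Φ (j + 1) (ε (t - ((j:ℤ) + 1)))) =
          ∑' j : ℕ, (Φt (j + 1) (ε (t - ((j:ℤ) + 1))) - Φt j (ε (t - ((j:ℤ) + 1)))) := by
        apply tsum_congr; intro j
        rw [← hop j]
        simp [ContinuousLinearMap.add_apply]
      rw [this, Summable.tsum_sub Sa Sb]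
      abel
    rw [hζt, hdiff, ← add_assoc]
    congr 1
    rw [← ContinuousLinearMap.add_apply, hΦ10]
  refine ⟨sum1, sum2, ?_⟩
  intro t ht
  induction t, ht using Nat.le_induction with
  | base =>
    simp only [Finset.Icc_self, Finset.sum_singleton, Nat.cast_one]
    have := key 1
    norm_num at this
    rw [this]; abel
  | succ n hn ih =>
    rw [Finset.sum_Icc_succ_top (by omega : 1 ≤ n + 1),
        Finset.sum_Icc_succ_top (by omega : 1 ≤ n + 1) (fun s => ε (s:ℤ)), ih]
    have hk := key ((n:ℤ) + 1)
    have hcast : ((n:ℤ) + 1 - 1) = (n:ℤ) := by omega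
    rw [hcast] at hk
    push_cast
    rw [hk, map_add]
    abel
end

section
/- (Cointegrating vectors annihilate the stochastic-trend component.) Let (Φ_j)_{j≥0} be bounded linear operators on H with Σ_{j≥1} j·‖Φ_j‖_op < ∞ and Σ_{j≥0} ‖Φ_j‖_op < ∞, and let ε : ℤ → H satisfy ‖ε_t‖ ≤ M for all t ∈ ℤ and some M > 0. Set Φ̃_j := −Σ_{k=j+1}^∞ Φ_k, Φ(1) := Σ_{j=0}^∞ Φ_j, ζ_t := Σ_{j=0}^∞ Φ_j ε_{t−j}, and η_t := Σ_{j=0}^∞ Φ̃_j ε_{t−j}. If x ∈ H satisfies ⟨Φ(1)h, x⟩ = 0 for every h ∈ H (i.e., x is orthogonal to the range of Φ(1)), then for every integer t ≥ 1: ⟨Σ_{s=1}^t ζ_s, x⟩ = ⟨η_t, x⟩ − ⟨η_0, x⟩. -/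
open scoped RealInnerProductSpace

/-- Cointegrating vectors annihilate the stochastic-trend component:
if `x` is orthogonal to the range of `Φ(1)`, then
`⟨Σ_{s=1}^t ζ_s, x⟩ = ⟨η_t, x⟩ - ⟨η_0, x⟩` for every `t ≥ 1`. -/
theorem stmt3 {H : Type*} [NormedAddCommGroup H] [InnerProductSpace ℝ H]
    [CompleteSpace H] [TopologicalSpace.SeparableSpace H]
    (Φ : ℕ → H →L[ℝ] H) (ε : ℤ → H) (M : ℝ) (hM : 0 < M)
    (hε : ∀ t : ℤ, ‖ε t‖ ≤ M)
    (h1 : Summable fun j : ℕ => (j : ℝ) * ‖Φ j‖)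
    (h2 : Summable fun j : ℕ => ‖Φ j‖)
    (Φt : ℕ → H →L[ℝ] H) (hΦt : ∀ j : ℕ, Φt j = -∑' k : ℕ, Φ (j + 1 + k))
    (Φ1 : H →L[ℝ] H) (hΦ1 : Φ1 = ∑' j : ℕ, Φ j)
    (ζ η : ℤ → H)
    (hζ : ∀ t : ℤ, ζ t = ∑' j : ℕ, Φ j (ε (t - (j : ℤ))))
    (hη : ∀ t : ℤ, η t = ∑' j : ℕ, Φt j (ε (t - (j : ℤ))))
    (x : H) (hx : ∀ h : H, ⟪Φ1 h, x⟫ = 0) :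
    ∀ t : ℕ, 1 ≤ t →
      ⟪∑ s ∈ Finset.Icc 1 t, ζ (s : ℤ), x⟫ = ⟪η (t : ℤ), x⟫ - ⟪η 0, x⟫ := by
  -- tail norms
  have htail : ∀ j : ℕ, Summable (fun k : ℕ => ‖Φ (j + 1 + k)‖) := by
    intro j
    have := (summable_nat_add_iff (f := fun n => ‖Φ n‖) (j + 1)).2 h2
    refine this.congr fun k => ?_
    rw [add_comm k (j+1)]
  have htailop : ∀ j : ℕ, Summable (fun k : ℕ => Φ (j + 1 + k)) := fun j =>
    Summable.of_norm (htail j)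
  set r : ℕ → ℝ := fun j => ∑' k : ℕ, ‖Φ (j + 1 + k)‖ with hr
  have hΦtnorm : ∀ j, ‖Φt j‖ ≤ r j := by
    intro j
    rw [hΦt j, norm_neg]
    exact norm_tsum_le_tsum_norm (htail j)
  -- summability of r via Fubini-type argument
  have hrsum : Summable r := by
    set f : ℕ × ℕ → ℝ := fun p => if p.2 < p.1 then ‖Φ p.1‖ else 0 with hf
    have hfnn : ∀ p, 0 ≤ f p := by
      intro p; dsimp [f]; split <;> positivity
    have hfslice : ∀ n : ℕ, Summable fun j => f (n, j) := by
      intro n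
      apply summable_of_ne_finset_zero (s := Finset.range n)
      intro j hj
      simp only [Finset.mem_range, not_lt] at hj
      simp [f, Nat.not_lt.2 hj]
    have hfsum : Summable f := by
      rw [summable_prod_of_nonneg hfnn]
      refine ⟨hfslice, ?_⟩
      refine h1.congr fun n => ?_
      rw [tsum_eq_sum (s := Finset.range n) (by intro j hj; simp only [Finset.mem_range, not_lt] at hj; simp [f, Nat.not_lt.2 hj])]
      have hc : ∀ j ∈ Finset.range n, f (n, j) = ‖Φ n‖ := fun j hj =>
        if_pos (Finset.mem_range.1 hj)
      rw [Finset.sum_congr rfl hc, Finset.sum_const, Finset.card_range, nsmul_eq_mul]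
    have hi : Function.Injective (fun p : ℕ × ℕ => ((p.1 + 1 + p.2, p.1) : ℕ × ℕ)) := by
      intro a b hab
      simp only [Prod.mk.injEq] at hab
      obtain ⟨h1', h2'⟩ := hab
      exact Prod.ext h2' (by omega)
    have hg : Summable (fun p : ℕ × ℕ => ‖Φ (p.1 + 1 + p.2)‖) := by
      have := hfsum.comp_injective hi
      refine this.congr fun p => ?_
      simp [f]; omega
    exact ((summable_prod_of_nonneg (fun p => norm_nonneg _)).mp hg).2
  -- summability of the series defining ζ and η (vector valued)
  have hζsum : ∀ t : ℤ, Summable (fun j : ℕ => Φ j (ε (t - (j : ℤ)))) := by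
    intro t
    apply Summable.of_norm
    apply Summable.of_nonneg_of_le (fun j => norm_nonneg _) (fun j => ?_) (h2.mul_right M)
    calc ‖Φ j (ε (t - (j:ℤ)))‖ ≤ ‖Φ j‖ * ‖ε (t - (j:ℤ))‖ := (Φ j).le_opNorm _
      _ ≤ ‖Φ j‖ * M := by
        exact mul_le_mul_of_nonneg_left (hε _) (norm_nonneg _)
  have hηsum : ∀ t : ℤ, Summable (fun j : ℕ => Φt j (ε (t - (j : ℤ)))) := by
    intro t
    apply Summable.of_norm
    apply Summable.of_nonneg_of_le (fun j => norm_nonneg _) (fun j => ?_) (hrsum.mul_right M)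
    calc ‖Φt j (ε (t - (j:ℤ)))‖ ≤ ‖Φt j‖ * ‖ε (t - (j:ℤ))‖ := (Φt j).le_opNorm _
      _ ≤ r j * M := by
        apply mul_le_mul (hΦtnorm j) (hε _) (norm_nonneg _)
        exact le_trans (norm_nonneg _) (hΦtnorm j)
  -- inner product with x commutes with the tsums
  have hinner : ∀ (g : ℕ → H), Summable g → ⟪∑' j, g j, x⟫ = ∑' j, ⟪g j, x⟫ := by
    intro g hg
    have := (innerSL ℝ x).map_tsum hg
    simpa [real_inner_comm] using this
  have hsumminner : ∀ (g : ℕ → H), Summable g → Summable (fun j => (⟪g j, x⟫ : ℝ)) := by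
    intro g hg
    exact ((innerSL ℝ x).summable (by exact hg)).congr (fun j => by simp [real_inner_comm])
  -- operator identities
  have hΦt_succ : ∀ j : ℕ, Φt (j + 1) - Φt j = Φ (j + 1) := by
    intro j
    have h0 : (∑' k : ℕ, Φ (j + 1 + k)) = Φ (j + 1) + ∑' k : ℕ, Φ (j + 1 + 1 + k) := by
      rw [Summable.tsum_eq_zero_add (htailop j)]
      congr 1
      exact tsum_congr fun k => by congr 1; omega
    rw [hΦt (j+1), hΦt j, h0]
    abel
  have hΦt0 : Φt 0 = Φ 0 - Φ1 := by
    have h0 : (∑' j : ℕ, Φ j) = Φ 0 + ∑' k : ℕ, Φ (0 + 1 + k) := by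
      rw [Summable.tsum_eq_zero_add (Summable.of_norm h2)]
      congr 1
      exact tsum_congr fun k => by congr 1; omega
    rw [hΦt 0, hΦ1, h0]
    abel
  -- key one-step identity
  have key : ∀ t : ℤ, ⟪ζ t, x⟫ = ⟪η t, x⟫ - ⟪η (t - 1), x⟫ := by
    intro t
    set a : ℕ → ℝ := fun j => ⟪Φ j (ε (t - (j : ℤ))), x⟫ with ha
    set b : ℕ → ℝ := fun j => ⟪Φt j (ε (t - (j : ℤ))), x⟫ with hb
    set c : ℕ → ℝ := fun j => ⟪Φt j (ε (t - 1 - (j : ℤ))), x⟫ with hc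
    have hasum : Summable a := hsumminner _ (hζsum t)
    have hbsum : Summable b := hsumminner _ (hηsum t)
    have hcsum : Summable c := hsumminner _ (hηsum (t - 1))
    have e1 : ⟪ζ t, x⟫ = ∑' j, a j := by rw [hζ t]; exact hinner _ (hζsum t)
    have e2 : ⟪η t, x⟫ = ∑' j, b j := by rw [hη t]; exact hinner _ (hηsum t)
    have e3 : ⟪η (t - 1), x⟫ = ∑' j, c j := by rw [hη (t-1)]; exact hinner _ (hηsum (t-1))
    have hb0 : b 0 = a 0 := by
      simp only [ha, hb, hΦt0]
      simp only [ContinuousLinearMap.sub_apply, inner_sub_left, hx]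
      ring
    have hshift : ∀ j : ℕ, b (j + 1) - c j = a (j + 1) := by
      intro j
      have hidx : t - ((j : ℤ) + 1) = t - 1 - (j : ℤ) := by ring
      simp only [ha, hb, hc]
      rw [← inner_sub_left]
      congr 1
      push_cast [hidx]
      rw [← ContinuousLinearMap.sub_apply, hΦt_succ j]
    have hbsucc : Summable (fun j => b (j + 1)) := (summable_nat_add_iff 1).2 hbsum
    have e4 : ∑' j, b j = b 0 + ∑' j, b (j + 1) := Summable.tsum_eq_zero_add hbsum
    have e5 : ∑' j, a j = a 0 + ∑' j, a (j + 1) := Summable.tsum_eq_zero_add hasum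
    have e6 : (∑' j, b (j + 1)) - ∑' j, c j = ∑' j, a (j + 1) := by
      rw [← Summable.tsum_sub hbsucc hcsum]
      exact tsum_congr hshift
    rw [e1, e2, e3, e4, e5, hb0]
    rw [← e6]
    ring
  -- telescoping
  intro t ht
  have hsum : ⟪∑ s ∈ Finset.Icc 1 t, ζ (s : ℤ), x⟫ = ∑ s ∈ Finset.Icc 1 t, ⟪ζ (s : ℤ), x⟫ :=
    sum_inner _ _ x
  rw [hsum]
  have hIcc : ∑ s ∈ Finset.Icc 1 t, (⟪ζ (s : ℤ), x⟫ : ℝ)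
      = ∑ i ∈ Finset.range t, ⟪ζ ((i : ℤ) + 1), x⟫ := by
    rw [show Finset.Icc 1 t = Finset.Ico 1 (t+1) by rw [Finset.Ico_add_one_right_eq_Icc],
      Finset.sum_Ico_eq_sum_range]
    simp only [Nat.add_sub_cancel]
    refine Finset.sum_congr rfl fun i _ => ?_
    congr 2
    push_cast
    ring
  rw [hIcc]
  have hG : ∀ i ∈ Finset.range t, (⟪ζ ((i : ℤ) + 1), x⟫ : ℝ)
      = (fun n : ℕ => (⟪η (n : ℤ), x⟫ : ℝ)) (i + 1) - (fun n : ℕ => (⟪η (n : ℤ), x⟫ : ℝ)) i := by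
    intro i _
    have := key ((i : ℤ) + 1)
    simpa using this
  rw [Finset.sum_congr rfl hG, Finset.sum_range_sub (fun n : ℕ => (⟪η (n : ℤ), x⟫ : ℝ))]
  norm_num
end
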